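/- Let I : H → ℝ be a C² functional on a Hilbert space (H,⟨·,·⟩) for which Assumptions A, B and C hold for some finite-dimensional submanifold Z ⊂ H and continuous λ : Z → (0,∞). Then there cannot be any sequence of critical points u_k of I for which there are z_k ∈ Z with λ(z_k) → ∞ and dist_H(u_k, Z) = ‖z_k − u_k‖_H → 0. -/

import Mathlib

/-!
STATEMENT 3: If Assumptions A, B, C of the paper hold for a C² functional `I` on a Hilbert
space `H`, a finite-dimensional submanifold `Z ⊂ H` and a continuous scale function
`λ : Z → (0,∞)`, then there is no sequence of critical points `u_k` of `I` with foot points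
`z_k ∈ Z` realising the distance to `Z`, `λ(z_k) → ∞` and `dist(u_k, Z) → 0`.
-/

noncomputable section
open Filter Metric Set
open scoped RealInnerProductSpace Topology

variable {H : Type*} [NormedAddCommGroup H] [InnerProductSpace ℝ H] [CompleteSpace H]

/-- the first variation dI(u) of a functional `I` at `u`. -/
def dE (I : H → ℝ) (u : H) : H →L[ℝ] ℝ := fderiv ℝ I u

/-- the second variation d²I(u) of a functional `I` at `u`. -/
def d2E (I : H → ℝ) (u : H) : H →L[ℝ] H →L[ℝ] ℝ := fderiv ℝ (fun v => fderiv ℝ I v) u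

/-- the dual norm `‖T‖_{(V)*}` of a continuous functional `T` restricted to a subspace `V`. -/
def restrNorm (V : Submodule ℝ H) (T : H →L[ℝ] ℝ) : ℝ :=
  sInf {c | 0 ≤ c ∧ ∀ w ∈ V, |T w| ≤ c * ‖w‖}

/-- The data of the finite-dimensional submanifold `Z` of almost-critical points: the set `Z`,
its tangent spaces `T z` (finite dimensional), the first-order condition that whenever the
distance of `u` to `Z` is realised at `z ∈ Z` the vector `u - z` is orthogonal to the tangent
space `T z` (this encodes that `Z` is a submanifold), and the continuous, positive scale
function `λ` on `Z`. -/
structure ZData (H : Type*) [NormedAddCommGroup H] [InnerProductSpace ℝ H]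
    [CompleteSpace H] where
  Z : Set H
  /-- the tangent space `T_zZ` -/
  T : H → Submodule ℝ H
  finDim : ∀ z ∈ Z, FiniteDimensional ℝ (T z)
  foot_orth : ∀ u z, z ∈ Z → ‖u - z‖ = Metric.infDist u Z → u - z ∈ (T z)ᗮ
  /-- the scale function `λ : Z → (0,∞)` -/
  lam : H → ℝ
  lam_pos : ∀ z ∈ Z, 0 < lam z
  lam_cont : ContinuousOn lam Z

/-- `Z_{λ₀}`, the elements of `Z` of scale at least `λ₀`. -/
def ZData.Zge (D : ZData H) (μ : ℝ) : Set H := {z ∈ D.Z | μ ≤ D.lam z}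

/-- `V_z`, the orthogonal complement of `T_zZ` in `H`. -/
def ZData.V (D : ZData H) (z : H) : Submodule ℝ H := (D.T z)ᗮ

/-- Assumption A: the second variation of `I` is uniformly definite orthogonally to `Z` on
`Z_{λ₀}`: `V_z` splits orthogonally as `V_z⁺ ⊕ V_z⁻` with `d²I(z)[w⁺,w⁻] = 0` and
`± d²I(z)[w^±,w^±] ≥ c₀ ‖w^±‖²`. -/
def AssumptionA (I : H → ℝ) (D : ZData H) (lam0 c0 : ℝ) : Prop :=
  0 < c0 ∧ ∀ z ∈ D.Zge lam0, ∃ P N : Submodule ℝ H,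
    P ≤ D.V z ∧ N ≤ D.V z ∧
    (∀ w ∈ D.V z, ∃ p ∈ P, ∃ n ∈ N, w = p + n) ∧
    (∀ p ∈ P, ∀ n ∈ N, ⟪p, n⟫ = 0 ∧ d2E I z p n = 0) ∧
    (∀ p ∈ P, c0 * ‖p‖ ^ 2 ≤ d2E I z p p) ∧
    (∀ n ∈ N, d2E I z n n ≤ -(c0 * ‖n‖ ^ 2))

/-- Assumption B: there are non-increasing positive `f₀, f₁, f₂` on `[λ₀,∞)` and `ν ≥ 1` with
`(f₁f₂ + f₂^ν)/f₀ → 0`, and unit vectors `y_z` for `z ∈ Z_{λ₀}` with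
`|dI(z)(y_z)| ≥ f₀(λ(z))`, `‖d²I(z)(y_z,·)‖_{(V_z)*} ≤ f₁(λ(z))`,
`‖dI(z)‖_{(V_z)*} ≤ f₂(λ(z))` and
`|(d²I(z+tw) − d²I(z))[y_z,w]| ≤ C ‖w‖^ν` for `w ∈ V_z`, `t ∈ [0,1]`. -/
def AssumptionB (I : H → ℝ) (D : ZData H) (lam0 : ℝ)
    (f0 f1 f2 : ℝ → ℝ) (nu : ℝ) (y : H → H) : Prop :=
  1 ≤ nu ∧
  (∀ l, lam0 ≤ l → 0 < f0 l ∧ 0 < f1 l ∧ 0 < f2 l) ∧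
  AntitoneOn f0 (Ici lam0) ∧ AntitoneOn f1 (Ici lam0) ∧ AntitoneOn f2 (Ici lam0) ∧
  Tendsto (fun l => (f1 l * f2 l + f2 l ^ nu) / f0 l) atTop (𝓝 0) ∧
  (∀ z ∈ D.Zge lam0, ‖y z‖ = 1 ∧
    f0 (D.lam z) ≤ |dE I z (y z)| ∧
    restrNorm (D.V z) (d2E I z (y z)) ≤ f1 (D.lam z) ∧
    restrNorm (D.V z) (dE I z) ≤ f2 (D.lam z)) ∧
  (∃ C : ℝ, ∀ z ∈ D.Zge lam0, ∀ w ∈ D.V z, ∀ t ∈ Icc (0:ℝ) 1,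
    |d2E I (z + t • w) (y z) w - d2E I z (y z) w| ≤ C * ‖w‖ ^ nu)

/-- a modulus of continuity near zero -/
def ModulusOfContinuity (ω : ℝ → ℝ) : Prop :=
  (∀ t, 0 ≤ t → 0 ≤ ω t) ∧ MonotoneOn ω (Ici 0) ∧ Tendsto ω (𝓝[≥] 0) (𝓝 0)

/-- Assumption C: on the `δ`-neighbourhood of `Z_{λ₀}` the second variation of `I` is bounded
and has modulus of continuity `ω`. -/
def AssumptionC (I : H → ℝ) (D : ZData H) (lam0 : ℝ) (δ : ℝ) (ω : ℝ → ℝ) : Prop :=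
  0 < δ ∧ ModulusOfContinuity ω ∧
  (∃ C : ℝ, ∀ u, Metric.infDist u (D.Zge lam0) < δ → ‖d2E I u‖ ≤ C) ∧
  (∀ u₁ u₂, Metric.infDist u₁ (D.Zge lam0) < δ → Metric.infDist u₂ (D.Zge lam0) < δ →
    ‖d2E I u₁ - d2E I u₂‖ ≤ ω ‖u₁ - u₂‖)

omit [CompleteSpace H] in
lemma restrNorm_bound (V : Submodule ℝ H) (T : H →L[ℝ] ℝ) {w : H} (hw : w ∈ V) :
    |T w| ≤ restrNorm V T * ‖w‖ := by
  have hS : ‖T‖ ∈ {c | 0 ≤ c ∧ ∀ w ∈ V, |T w| ≤ c * ‖w‖} :=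
    ⟨norm_nonneg _, fun v _ => by simpa [Real.norm_eq_abs] using T.le_opNorm v⟩
  rcases eq_or_ne w 0 with rfl | hw0
  · simp
  · have hwpos : 0 < ‖w‖ := norm_pos_iff.mpr hw0
    have h1 : |T w| / ‖w‖ ≤ restrNorm V T := by
      apply le_csInf ⟨_, hS⟩
      intro c hc
      exact (div_le_iff₀ hwpos).mpr (hc.2 w hw)
    calc |T w| = |T w| / ‖w‖ * ‖w‖ := by field_simp
    _ ≤ restrNorm V T * ‖w‖ := by gcongr

omit [CompleteSpace H] in
lemma hasFDerivAt_dE (I : H → ℝ) (hI : ContDiff ℝ 2 I) (x : H) :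
    HasFDerivAt (dE I) (d2E I x) x := by
  have h1 : ContDiff ℝ 1 (fderiv ℝ I) := hI.fderiv_right (by norm_num)
  exact (h1.differentiable (by norm_num) x).hasFDerivAt

omit [CompleteSpace H] in
lemma d2E_symm (I : H → ℝ) (hI : ContDiff ℝ 2 I) (x a b : H) :
    d2E I x a b = d2E I x b a :=
  second_derivative_symmetric
    (fun y => (hI.differentiable (by norm_num) y).hasFDerivAt) (hasFDerivAt_dE I hI x) a b

omit [CompleteSpace H] in
lemma taylor_bound (I : H → ℝ) (hI : ContDiff ℝ 2 I) (z w v : H) (K : ℝ)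
    (hK : ∀ t ∈ Icc (0:ℝ) 1, |d2E I (z + t • w) w v - d2E I z w v| ≤ K) :
    |dE I (z + w) v - dE I z v - d2E I z w v| ≤ K := by
  set g : ℝ → ℝ := fun t => dE I (z + t • w) v - t * (d2E I z w v) with hg
  have hder : ∀ t : ℝ, HasDerivAt g (d2E I (z + t • w) w v - d2E I z w v) t := by
    intro t
    have hc : HasDerivAt (fun t : ℝ => z + t • w) w t := by
      simpa using ((hasDerivAt_id t).smul_const w).const_add z
    have h1 : HasDerivAt (fun t : ℝ => dE I (z + t • w) v) (d2E I (z + t • w) w v) t := by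
      have h2 : HasDerivAt (fun t : ℝ => dE I (z + t • w)) (d2E I (z + t • w) w) t :=
        (hasFDerivAt_dE I hI (z + t • w)).comp_hasDerivAt t hc
      have := HasDerivAt.clm_apply h2 (hasDerivAt_const t v)
      simpa using this
    exact h1.sub ((hasDerivAt_mul_const (d2E I z w v)))
  have := Convex.norm_image_sub_le_of_norm_hasDerivWithin_le
    (f := g) (f' := fun t => d2E I (z + t • w) w v - d2E I z w v) (s := Icc (0:ℝ) 1)
    (fun t ht => (hder t).hasDerivWithinAt)
    (fun t ht => by simpa [Real.norm_eq_abs] using hK t ht)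
    (convex_Icc 0 1) (left_mem_Icc.mpr zero_le_one) (right_mem_Icc.mpr zero_le_one)
  have heq : dE I (z + w) v - dE I z v - d2E I z w v = g 1 - g 0 := by
    simp [hg]; ring
  rw [heq]
  simpa [Real.norm_eq_abs] using this

/-- **Theorem (no critical points accumulating on `Z` at large scale).** If Assumptions A, B
and C hold for the C² functional `I`, the finite-dimensional submanifold `Z` and the
continuous `λ : Z → (0,∞)`, then there is no sequence of critical points `u_k` of `I` with
`z_k ∈ Z`, `λ(z_k) → ∞` and `dist_H(u_k,Z) = ‖z_k − u_k‖ → 0`. -/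
theorem no_critical_points_accumulating_on_Z
    (I : H → ℝ) (hI : ContDiff ℝ 2 I) (D : ZData H)
    (lam0 c0 δ : ℝ) (f0 f1 f2 : ℝ → ℝ) (nu : ℝ) (y : H → H) (ω : ℝ → ℝ)
    (hA : AssumptionA I D lam0 c0)
    (hB : AssumptionB I D lam0 f0 f1 f2 nu y)
    (hC : AssumptionC I D lam0 δ ω) :
    ¬ ∃ u z : ℕ → H,
        (∀ k, fderiv ℝ I (u k) = 0) ∧
        (∀ k, z k ∈ D.Z) ∧
        Tendsto (fun k => D.lam (z k)) atTop atTop ∧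
        (∀ k, ‖z k - u k‖ = Metric.infDist (u k) D.Z) ∧
        Tendsto (fun k => ‖z k - u k‖) atTop (𝓝 0) := by
  rintro ⟨u, z, hcrit, hzZ, hlamTop, hfoot, hdistto⟩
  obtain ⟨c0pos, hA2⟩ := hA
  obtain ⟨hnu, hfpos, hf0m, hf1m, hf2m, hquot, hB7, CB, hB8⟩ := hB
  obtain ⟨δpos, ⟨ωnn, ωmono, ωtend⟩, -, hCmod⟩ := hC
  set CB' := max CB 0 with hCB'
  have hCB'0 : 0 ≤ CB' := le_max_right _ _
  have hnu0 : (0:ℝ) ≤ nu := le_trans zero_le_one hnu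
  have hw0 : Tendsto (fun k => ‖u k - z k‖) atTop (𝓝 0) := by
    have heq : (fun k => ‖u k - z k‖) = fun k => ‖z k - u k‖ := by
      funext k; rw [norm_sub_rev]
    rw [heq]; exact hdistto
  set M := max (2 / c0) (CB' * (2 / c0) ^ nu) with hM
  have hMpos : 0 < M := lt_of_lt_of_le (by positivity) (le_max_left _ _)
  -- the eventual statements
  have E1 : ∀ᶠ k in atTop, lam0 ≤ D.lam (z k) := hlamTop.eventually_ge_atTop lam0
  have E2 : ∀ᶠ k in atTop, ‖u k - z k‖ < δ := hw0.eventually_lt_const δpos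
  have hωw : Tendsto (fun k => ω ‖u k - z k‖) atTop (𝓝 0) := by
    refine ωtend.comp ?_
    rw [tendsto_nhdsWithin_iff]
    exact ⟨hw0, Eventually.of_forall fun k => norm_nonneg _⟩
  have E3 : ∀ᶠ k in atTop, ω ‖u k - z k‖ ≤ c0 / 2 :=
    (hωw.eventually_lt_const (by linarith)).mono fun k h => h.le
  have hq : Tendsto (fun k => M * ((f1 (D.lam (z k)) * f2 (D.lam (z k)) +
      f2 (D.lam (z k)) ^ nu) / f0 (D.lam (z k)))) atTop (𝓝 0) := by
    have := (hquot.comp hlamTop).const_mul M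
    simpa using this
  have E4 : ∀ᶠ k in atTop, M * ((f1 (D.lam (z k)) * f2 (D.lam (z k)) +
      f2 (D.lam (z k)) ^ nu) / f0 (D.lam (z k))) < 1 := hq.eventually_lt_const one_pos
  obtain ⟨k, hk1, hk2, hk3, hk4⟩ := (E1.and (E2.and (E3.and E4))).exists
  -- fix k and set up notation
  set z₀ := z k with hz₀
  set u₀ := u k with hu₀
  set w₀ := u₀ - z₀ with hw₀
  set l := D.lam z₀ with hl
  obtain ⟨f0pos, f1pos, f2pos⟩ := hfpos l hk1
  have hzge : z₀ ∈ D.Zge lam0 := ⟨hzZ k, hk1⟩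
  have hwV : w₀ ∈ D.V z₀ :=
    D.foot_orth u₀ z₀ (hzZ k) ((norm_sub_rev u₀ z₀).trans (hfoot k))
  have hcrit0 : dE I u₀ = 0 := hcrit k
  have huz : z₀ + w₀ = u₀ := by rw [hw₀]; abel
  obtain ⟨hy1, hy2, hy3, hy4⟩ := hB7 z₀ hzge
  have hwnu : (0:ℝ) ≤ ‖w₀‖ ^ nu := Real.rpow_nonneg (norm_nonneg _) nu
  -- Step 1 : f0 l ≤ f1 l * ‖w₀‖ + CB' * ‖w₀‖ ^ nu
  have step1 : f0 l ≤ f1 l * ‖w₀‖ + CB' * ‖w₀‖ ^ nu := by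
    have hKb : ∀ t ∈ Icc (0:ℝ) 1,
        |d2E I (z₀ + t • w₀) w₀ (y z₀) - d2E I z₀ w₀ (y z₀)| ≤ CB' * ‖w₀‖ ^ nu := by
      intro t ht
      rw [d2E_symm I hI (z₀ + t • w₀) w₀ (y z₀), d2E_symm I hI z₀ w₀ (y z₀)]
      exact (hB8 z₀ hzge w₀ hwV t ht).trans
        (mul_le_mul_of_nonneg_right (le_max_left _ _) hwnu)
    have hT := taylor_bound I hI z₀ w₀ (y z₀) _ hKb
    rw [huz, hcrit0] at hT
    simp only [ContinuousLinearMap.zero_apply] at hT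
    set a := dE I z₀ (y z₀) with ha
    set b := d2E I z₀ w₀ (y z₀) with hb
    have hab : |a + b| ≤ CB' * ‖w₀‖ ^ nu := by
      have heq : (0:ℝ) - a - b = -(a + b) := by ring
      rwa [heq, abs_neg] at hT
    have tri : |a| ≤ |a + b| + |b| := by
      have := abs_add_le (a + b) (-b)
      simpa using this
    have hbb : |b| ≤ f1 l * ‖w₀‖ := by
      rw [hb, d2E_symm I hI z₀ w₀ (y z₀)]
      exact (restrNorm_bound _ _ hwV).trans
        (mul_le_mul_of_nonneg_right hy3 (norm_nonneg _))
    linarith [hy2]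
  -- Step 2 : ‖w₀‖ ≤ 2 / c0 * f2 l
  obtain ⟨P, N, hPV, hNV, hdec, hortho, hpos, hneg⟩ := hA2 z₀ hzge
  obtain ⟨p, hp, n, hn, hwpn⟩ := hdec w₀ hwV
  obtain ⟨hinner, hcross⟩ := hortho p hp n hn
  set v := p - n with hv
  have hvV : v ∈ D.V z₀ := Submodule.sub_mem _ (hPV hp) (hNV hn)
  have hnorm2 : ‖w₀‖ ^ 2 = ‖p‖ ^ 2 + ‖n‖ ^ 2 := by
    rw [hwpn, norm_add_sq_real, hinner]; ring
  have hvnorm2 : ‖v‖ ^ 2 = ‖p‖ ^ 2 + ‖n‖ ^ 2 := by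
    rw [hv, norm_sub_sq_real, hinner]; ring
  have hvw : ‖v‖ = ‖w₀‖ := by
    rw [← Real.sqrt_sq (norm_nonneg v), ← Real.sqrt_sq (norm_nonneg w₀), hvnorm2, hnorm2]
  have hcross' : d2E I z₀ n p = 0 := by rw [d2E_symm I hI]; exact hcross
  have hexp : d2E I z₀ w₀ v = d2E I z₀ p p - d2E I z₀ n n := by
    rw [hwpn, hv]
    simp [map_add, map_sub, ContinuousLinearMap.add_apply, hcross, hcross']
  have hquad : c0 * ‖w₀‖ ^ 2 ≤ d2E I z₀ w₀ v := by
    rw [hexp, hnorm2, mul_add]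
    linarith [hpos p hp, hneg n hn]
  have hK2 : ∀ t ∈ Icc (0:ℝ) 1,
      |d2E I (z₀ + t • w₀) w₀ v - d2E I z₀ w₀ v| ≤ ω ‖w₀‖ * ‖w₀‖ * ‖w₀‖ := by
    intro t ht
    have htw : ‖t • w₀‖ ≤ ‖w₀‖ := by
      rw [norm_smul, Real.norm_eq_abs, abs_of_nonneg ht.1]
      exact mul_le_of_le_one_left (norm_nonneg _) ht.2
    have hx1 : infDist (z₀ + t • w₀) (D.Zge lam0) < δ := by
      refine lt_of_le_of_lt (infDist_le_dist_of_mem hzge) ?_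
      rw [dist_eq_norm, add_sub_cancel_left]
      exact lt_of_le_of_lt htw hk2
    have hz1 : infDist z₀ (D.Zge lam0) < δ := by
      refine lt_of_le_of_lt (infDist_le_dist_of_mem hzge) ?_
      rw [dist_self]; exact δpos
    have hmod := hCmod (z₀ + t • w₀) z₀ hx1 hz1
    rw [add_sub_cancel_left] at hmod
    have hω1 : ω ‖t • w₀‖ ≤ ω ‖w₀‖ := ωmono (norm_nonneg _) (norm_nonneg _) htw
    have hopn : ‖d2E I (z₀ + t • w₀) - d2E I z₀‖ ≤ ω ‖w₀‖ := hmod.trans hω1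
    calc |d2E I (z₀ + t • w₀) w₀ v - d2E I z₀ w₀ v|
        = |((d2E I (z₀ + t • w₀) - d2E I z₀) w₀) v| := by
          simp [ContinuousLinearMap.sub_apply]
      _ ≤ ‖(d2E I (z₀ + t • w₀) - d2E I z₀) w₀‖ * ‖v‖ := by
          simpa [Real.norm_eq_abs] using
            ((d2E I (z₀ + t • w₀) - d2E I z₀) w₀).le_opNorm v
      _ ≤ (‖d2E I (z₀ + t • w₀) - d2E I z₀‖ * ‖w₀‖) * ‖v‖ := by
          gcongr
          exact (d2E I (z₀ + t • w₀) - d2E I z₀).le_opNorm w₀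
      _ ≤ ω ‖w₀‖ * ‖w₀‖ * ‖w₀‖ := by
          rw [hvw]
          gcongr
  have hT2 := taylor_bound I hI z₀ w₀ v _ hK2
  rw [huz, hcrit0] at hT2
  simp only [ContinuousLinearMap.zero_apply] at hT2
  have hab2 : |dE I z₀ v + d2E I z₀ w₀ v| ≤ ω ‖w₀‖ * ‖w₀‖ * ‖w₀‖ := by
    have heq : (0:ℝ) - dE I z₀ v - d2E I z₀ w₀ v = -(dE I z₀ v + d2E I z₀ w₀ v) := by ring
    rwa [heq, abs_neg] at hT2
  have ha2 : |dE I z₀ v| ≤ f2 l * ‖w₀‖ := by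
    rw [← hvw]
    exact (restrNorm_bound _ _ hvV).trans (mul_le_mul_of_nonneg_right hy4 (norm_nonneg _))
  have hwineq : c0 * ‖w₀‖ ^ 2 ≤ f2 l * ‖w₀‖ + (c0 / 2) * ‖w₀‖ ^ 2 := by
    have h1 : d2E I z₀ w₀ v ≤ |dE I z₀ v + d2E I z₀ w₀ v| + |dE I z₀ v| := by
      have := abs_add_le (dE I z₀ v + d2E I z₀ w₀ v) (-(dE I z₀ v))
      simp only [add_neg_cancel_comm] at this
      calc d2E I z₀ w₀ v ≤ |d2E I z₀ w₀ v| := le_abs_self _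
        _ ≤ |dE I z₀ v + d2E I z₀ w₀ v| + |dE I z₀ v| := by simpa using this
    have h2 : ω ‖w₀‖ * ‖w₀‖ * ‖w₀‖ ≤ (c0 / 2) * ‖w₀‖ ^ 2 := by
      have := mul_le_mul_of_nonneg_right
        (mul_le_mul_of_nonneg_right hk3 (norm_nonneg w₀)) (norm_nonneg w₀)
      calc ω ‖w₀‖ * ‖w₀‖ * ‖w₀‖ ≤ c0 / 2 * ‖w₀‖ * ‖w₀‖ := this
        _ = (c0 / 2) * ‖w₀‖ ^ 2 := by ring
    linarith [hquad]
  have hwle : ‖w₀‖ ≤ 2 / c0 * f2 l := by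
    rcases eq_or_lt_of_le (norm_nonneg w₀) with h0 | h0
    · rw [← h0]; positivity
    · have h4 : (c0 / 2) * ‖w₀‖ * ‖w₀‖ ≤ f2 l * ‖w₀‖ := by
        have : ‖w₀‖ * ‖w₀‖ = ‖w₀‖ ^ 2 := by ring
        rw [mul_assoc, this]
        linarith
      have h5 : (c0 / 2) * ‖w₀‖ ≤ f2 l := le_of_mul_le_mul_right h4 h0
      rw [div_mul_eq_mul_div, le_div_iff₀ c0pos]
      linarith
  -- combine
  have hfinal : f0 l ≤ M * (f1 l * f2 l + f2 l ^ nu) := by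
    have t1 : f1 l * ‖w₀‖ ≤ M * (f1 l * f2 l) := by
      calc f1 l * ‖w₀‖ ≤ f1 l * (2 / c0 * f2 l) := by gcongr
        _ = (2 / c0) * (f1 l * f2 l) := by ring
        _ ≤ M * (f1 l * f2 l) := by
            apply mul_le_mul_of_nonneg_right (le_max_left _ _)
            positivity
    have t2 : CB' * ‖w₀‖ ^ nu ≤ M * f2 l ^ nu := by
      have hr : ‖w₀‖ ^ nu ≤ (2 / c0 * f2 l) ^ nu :=
        Real.rpow_le_rpow (norm_nonneg _) hwle hnu0
      have hmr : (2 / c0 * f2 l) ^ nu = (2 / c0) ^ nu * f2 l ^ nu :=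
        Real.mul_rpow (by positivity) f2pos.le
      calc CB' * ‖w₀‖ ^ nu ≤ CB' * ((2 / c0) ^ nu * f2 l ^ nu) := by
            rw [← hmr]; exact mul_le_mul_of_nonneg_left hr hCB'0
        _ = (CB' * (2 / c0) ^ nu) * f2 l ^ nu := by ring
        _ ≤ M * f2 l ^ nu := by
            apply mul_le_mul_of_nonneg_right (le_max_right _ _)
            positivity
    calc f0 l ≤ f1 l * ‖w₀‖ + CB' * ‖w₀‖ ^ nu := step1
      _ ≤ M * (f1 l * f2 l) + M * f2 l ^ nu := add_le_add t1 t2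
      _ = M * (f1 l * f2 l + f2 l ^ nu) := by ring
  have hone : (1:ℝ) ≤ M * ((f1 l * f2 l + f2 l ^ nu) / f0 l) := by
    rw [← mul_div_assoc, le_div_iff₀ f0pos, one_mul]
    exact hfinal
  linarith [hk4]
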